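/- With λ^TF = (2(s+2)/(π s))^{s/(s+2)}, the function ρ^TF(r) = (1/2)[λ^TF − r^s]_+ satisfies ∫_{ℝ²} ρ^TF(|x|) dx = 1, and the Thomas-Fermi ground state energy equals E^TF = (π s / (4(s+1) ε²)) (λ^TF)^{2(s+1)/s}. -/

import Mathlib

open MeasureTheory Set Real

abbrev E2 := EuclideanSpace ℝ (Fin 2)

/-- `λ^TF = (2(s+2)/(π s))^{s/(s+2)}`. -/
noncomputable def lamTF (s : ℝ) : ℝ := (2 * (s + 2) / (π * s)) ^ (s / (s + 2))

/-- The Thomas-Fermi density profile `ρ^TF(r) = (1/2) max(λ^TF − r^s, 0)`. -/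
noncomputable def rhoTF (s : ℝ) (r : ℝ) : ℝ := (1 / 2) * max (lamTF s - r ^ s) 0

lemma radial (f : ℝ → ℝ) : ∫ x : E2, f ‖x‖ = 2 * π * ∫ y in Ioi (0:ℝ), y * f y := by
  rw [MeasureTheory.integral_fun_norm_addHaar volume f]
  have hdim : Module.finrank ℝ E2 = 2 := finrank_euclideanSpace_fin
  rw [hdim]
  have hball : (volume (Metric.ball (0:E2) 1)).toReal = π := by
    rw [EuclideanSpace.volume_ball]
    norm_num [Real.Gamma_two, Real.sq_sqrt Real.pi_pos.le,
      ENNReal.toReal_ofReal Real.pi_pos.le]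
  rw [measureReal_def, hball]
  simp only [smul_eq_mul, pow_one, nsmul_eq_mul, Nat.cast_ofNat]
  norm_num
  ring

lemma key (a b p R : ℝ) (hp : 0 < p) (hR : 0 < R) (g : ℝ → ℝ)
    (hg : ∀ y, 0 < y → y ≤ R → g y = a - b * y ^ p)
    (hg' : ∀ y, R < y → g y = 0) :
    ∫ y in Ioi (0:ℝ), y * g y = a * R ^ 2 / 2 - b * R ^ (p + 2) / (p + 2) := by
  have h1 : ∫ y in Ioi (0:ℝ), y * g y
      = ∫ y in Ioi (0:ℝ), (Ioc (0:ℝ) R).indicator (fun y => y * (a - b * y ^ p)) y := by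
    refine setIntegral_congr_fun measurableSet_Ioi fun y hy => ?_
    rcases le_or_gt y R with h | h
    · rw [indicator_of_mem (show y ∈ Ioc (0:ℝ) R from ⟨hy, h⟩), hg y hy h]
    · rw [indicator_of_notMem (fun hm => absurd hm.2 h.not_ge), hg' y h, mul_zero]
  rw [h1, setIntegral_indicator measurableSet_Ioc,
    inter_eq_self_of_subset_right Ioc_subset_Ioi_self,
    ← intervalIntegral.integral_of_le hR.le]
  have h2 : ∫ y in (0:ℝ)..R, y * (a - b * y ^ p) = ∫ y in (0:ℝ)..R, (a * y - b * y ^ (p+1)) := by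
    refine intervalIntegral.integral_congr fun y hy => ?_
    rw [uIcc_of_le hR.le] at hy
    rw [Real.rpow_add' hy.1 (by positivity), Real.rpow_one]
    ring
  rw [h2, intervalIntegral.integral_sub ((intervalIntegral.intervalIntegrable_id).const_mul a)
      ((intervalIntegral.intervalIntegrable_rpow' (by linarith)).const_mul b),
    intervalIntegral.integral_const_mul, intervalIntegral.integral_const_mul,
    integral_id, integral_rpow (Or.inl (by linarith)),
    Real.zero_rpow (by positivity)]
  ring_nf

/-- With `λ^TF = (2(s+2)/(πs))^{s/(s+2)}`, the TF profile has unit mass and the TF ground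
state energy equals `(π s / (4(s+1)ε²)) (λ^TF)^{2(s+1)/s}`. -/
theorem tf_mass_and_energy (s ε : ℝ) (hs : 2 ≤ s) (hε : 0 < ε) :
    (∫ x : E2, rhoTF s ‖x‖ = 1) ∧
    (1 / ε ^ 2) * ∫ x : E2, (‖x‖ ^ s + rhoTF s ‖x‖) * rhoTF s ‖x‖
      = (π * s / (4 * (s + 1) * ε ^ 2)) * (lamTF s) ^ (2 * (s + 1) / s) := by
  have hs0 : 0 < s := by linarith
  have hs2 : (0:ℝ) < s + 2 := by linarith
  have hπ : π ≠ 0 := Real.pi_ne_zero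
  have hC : (0:ℝ) < 2 * (s + 2) / (π * s) := by positivity
  set l := lamTF s with hl
  have hlam : 0 < l := Real.rpow_pos_of_pos hC _
  set R := l ^ (1/s) with hRdef
  have hR : 0 < R := Real.rpow_pos_of_pos hlam _
  have hpow : ∀ q : ℝ, R ^ q = l ^ (q / s) := by
    intro q
    rw [hRdef, ← Real.rpow_mul hlam.le, one_div, inv_mul_eq_div]
  have hRs : R ^ s = l := by rw [hpow, div_self hs0.ne', Real.rpow_one]
  set u := l ^ (2/s) with hu
  have e1 : R ^ (2:ℕ) = u := by
    rw [← Real.rpow_natCast R 2, hpow]; norm_num; exact hu.symm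
  have e2 : R ^ (s + 2) = l * u := by
    rw [hpow, show (s+2)/s = 1 + 2/s by field_simp, Real.rpow_add hlam, Real.rpow_one]
  have e3 : R ^ (2*s + 2) = l * (l * u) := by
    rw [hpow, show (2*s+2)/s = 1 + (s+2)/s by field_simp; ring,
      Real.rpow_add hlam, Real.rpow_one, ← hpow, e2]
  have e4 : l ^ (2*(s+1)/s) = l * (l * u) := by
    rw [show 2*(s+1)/s = (2*s+2)/s by ring_nf, ← hpow, e3]
  have hCu : l * u = 2 * (s + 2) / (π * s) := by
    have h5 : l * u = l ^ ((s+2)/s) := by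
      rw [hu, show (s+2)/s = 1 + 2/s by field_simp, Real.rpow_add hlam, Real.rpow_one]
    rw [h5, hl, lamTF, ← Real.rpow_mul hC.le,
      show s/(s+2) * ((s+2)/s) = 1 by field_simp, Real.rpow_one]
  -- bounds on y^s relative to l
  have hle : ∀ y : ℝ, 0 < y → y ≤ R → y ^ s ≤ l := by
    intro y hy hyR
    calc y ^ s ≤ R ^ s := Real.rpow_le_rpow hy.le hyR hs0.le
    _ = l := hRs
  have hgt : ∀ y : ℝ, R < y → rhoTF s y = 0 := by
    intro y hy
    have : l ≤ y ^ s := by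
      rw [← hRs]; exact Real.rpow_le_rpow hR.le hy.le hs0.le
    rw [rhoTF, max_eq_right (by linarith), mul_zero]
  constructor
  · rw [radial (rhoTF s),
      key (l/2) (1/2) s R hs0 hR (rhoTF s)
        (fun y hy hyR => by
          rw [rhoTF, max_eq_left (by have := hle y hy hyR; linarith)]; ring)
        hgt,
      e1, e2]
    have h6 : 2 * π * (l / 2 * u / 2 - 1/2 * (l * u) / (s + 2))
        = π * s / (2 * (s + 2)) * (l * u) := by field_simp; ring
    rw [h6, hCu]
    field_simp
  · rw [show (∫ x : E2, (‖x‖ ^ s + rhoTF s ‖x‖) * rhoTF s ‖x‖)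
        = 2 * π * ∫ y in Ioi (0:ℝ), y * ((y ^ s + rhoTF s y) * rhoTF s y) from
        radial (fun r => (r ^ s + rhoTF s r) * rhoTF s r),
      key (l*l/4) (1/4) (2*s) R (by linarith) hR _
        (fun y hy hyR => by
          have hys : y ^ (2*s) = (y ^ s) ^ (2:ℕ) := by
            rw [← Real.rpow_natCast (y ^ s) 2, ← Real.rpow_mul hy.le]
            norm_num [mul_comm]
          rw [rhoTF, max_eq_left (by have := hle y hy hyR; linarith), hys]; ring)
        (fun y hy => by rw [hgt y hy, mul_zero]),
      e1, e3, e4]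
    have h7 : 2 * π * (l * l / 4 * u / 2 - 1/4 * (l * (l * u)) / (2*s + 2))
        = π * s / (4 * (s + 1)) * (l * (l * u)) := by
      have : s + 1 ≠ 0 := by positivity
      field_simp
      ring
    rw [h7]
    field_simp
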